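/- Under the PA setup, for every i with 1 ≤ i ≤ n, the subgroup N_i = ∏_{j≠i} T_j is intransitive on each orbit of M on V; that is, for every vertex γ ∈ V, N_i does not act transitively on the M-orbit of γ. -/

import Mathlib

def IsAutGroup {V : Type*} (Γ : SimpleGraph V) (G : Subgroup (Equiv.Perm V)) : Prop :=
  ∀ g ∈ G, ∀ u v : V, Γ.Adj u v → Γ.Adj (g u) (g v)

def stabOf {V : Type*} (G : Subgroup (Equiv.Perm V)) (α : V) : Subgroup (Equiv.Perm V) :=
  G ⊓ MulAction.stabilizer (Equiv.Perm V) α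

def TransOn {V : Type*} (H : Subgroup (Equiv.Perm V)) (S : Set V) : Prop :=
  ∀ x ∈ S, ∀ y ∈ S, ∃ g ∈ H, g x = y

def IsBlockOn {V : Type*} (H : Subgroup (Equiv.Perm V)) (S B : Set V) : Prop :=
  B ⊆ S ∧ ∀ g ∈ H, (⇑g '' B) = B ∨ Disjoint (⇑g '' B) B

def PrimOn {V : Type*} (H : Subgroup (Equiv.Perm V)) (S : Set V) : Prop :=
  TransOn H S ∧ ∀ B : Set V, IsBlockOn H S B → B.Subsingleton ∨ B = S

def orbitOf {V : Type*} (H : Subgroup (Equiv.Perm V)) (γ : V) : Set V :=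
  {v | ∃ g ∈ H, g γ = v}

def NormalIn {W : Type*} [Group W] (N H : Subgroup W) : Prop :=
  N ≤ H ∧ ∀ h ∈ H, ∀ x ∈ N, h * x * h⁻¹ ∈ N

def TwoArcTrans {V : Type*} (Γ : SimpleGraph V) (G : Subgroup (Equiv.Perm V)) : Prop :=
  ∀ a b c a' b' c' : V, Γ.Adj a b → Γ.Adj b c → a ≠ c →
    Γ.Adj a' b' → Γ.Adj b' c' → a' ≠ c' →
    ∃ g ∈ G, g a = a' ∧ g b = b' ∧ g c = c'

/-- The ordered product of one element from each of the subgroups `T i`. -/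
def prodOf {W : Type*} [Group W] {n : ℕ} (T : Fin n → Subgroup W)
    (f : (i : Fin n) → ↥(T i)) : W :=
  (List.ofFn fun i => ((f i : W))).prod

section helpers
variable {W : Type*} [Group W]

lemma prodOf_succ {n : ℕ} (T : Fin (n+1) → Subgroup W) (f : ∀ i, T i) :
    prodOf T f = (f 0 : W) * prodOf (fun i : Fin n => T i.succ) (fun i => f i.succ) := by
  simp [prodOf, List.ofFn_succ]

lemma prodOf_one {n : ℕ} (T : Fin n → Subgroup W) : prodOf T (1 : ∀ i, T i) = 1 := by
  apply List.prod_eq_one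
  intro x hx
  rw [List.mem_ofFn] at hx
  obtain ⟨i, rfl⟩ := hx
  simp

lemma commute_prodOf {n : ℕ} (T : Fin n → Subgroup W) (f : ∀ i, T i) (a : W)
    (h : ∀ i, Commute a (f i : W)) : Commute a (prodOf T f) := by
  apply Commute.list_prod_right
  intro x hx
  rw [List.mem_ofFn] at hx
  obtain ⟨i, rfl⟩ := hx
  exact h i

lemma prodOf_mem {n : ℕ} (T : Fin n → Subgroup W) (M : Subgroup W) (hTM : ∀ i, T i ≤ M)
    (f : ∀ i, T i) : prodOf T f ∈ M := by
  apply Subgroup.list_prod_mem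
  intro x hx
  rw [List.mem_ofFn] at hx
  obtain ⟨i, rfl⟩ := hx
  exact hTM i (f i).2

lemma prodOf_mul : ∀ {n : ℕ} (T : Fin n → Subgroup W),
    (∀ i j, i ≠ j → ∀ x ∈ T i, ∀ y ∈ T j, x * y = y * x) →
    ∀ f g : ∀ i, T i, prodOf T (f * g) = prodOf T f * prodOf T g
  | 0, T, _, f, g => by simp [prodOf]
  | (m+1), T, hc, f, g => by
    have hc' : ∀ i j : Fin m, i ≠ j → ∀ x ∈ T i.succ, ∀ y ∈ T j.succ, x * y = y * x :=
      fun i j hij => hc i.succ j.succ (fun h => hij (Fin.succ_injective m h))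
    have ih := prodOf_mul (fun i : Fin m => T i.succ) hc' (fun i => f i.succ) (fun i => g i.succ)
    have hcomm : Commute ((g 0 : W))
        (prodOf (fun i : Fin m => T i.succ) (fun i => f i.succ)) := by
      apply commute_prodOf
      intro i
      exact (hc i.succ 0 (Fin.succ_ne_zero i) _ (f i.succ).2 _ (g 0).2).symm
    rw [prodOf_succ, prodOf_succ, prodOf_succ]
    have htail : prodOf (fun i : Fin m => T i.succ) (fun i => (f * g) i.succ)
        = prodOf (fun i : Fin m => T i.succ) (fun i => f i.succ)
          * prodOf (fun i : Fin m => T i.succ) (fun i => g i.succ) := ih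
    show (((f 0 : T 0) * g 0 : T 0) : W) * _ = _
    rw [htail]
    push_cast
    rw [mul_assoc, mul_assoc, ← mul_assoc ((g 0 : W)), hcomm.eq, mul_assoc]

lemma prodOf_inv {n : ℕ} (T : Fin n → Subgroup W)
    (hc : ∀ i j, i ≠ j → ∀ x ∈ T i, ∀ y ∈ T j, x * y = y * x)
    (f : ∀ i, T i) : prodOf T f⁻¹ = (prodOf T f)⁻¹ := by
  rw [eq_inv_iff_mul_eq_one, ← prodOf_mul T hc, inv_mul_cancel, prodOf_one]

lemma prodOf_eq_of : ∀ {n : ℕ} (T : Fin n → Subgroup W) (f : ∀ i, T i) (k : Fin n),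
    (∀ j, j ≠ k → f j = 1) → prodOf T f = (f k : W)
  | 0, _, _, k, _ => k.elim0
  | (m+1), T, f, k, h => by
    induction k using Fin.cases with
    | zero =>
      rw [prodOf_succ]
      have : (fun i : Fin m => f i.succ) = 1 := by
        funext i; exact h i.succ (Fin.succ_ne_zero i)
      rw [this, prodOf_one, mul_one]
    | succ k' =>
      rw [prodOf_succ]
      have h0 : f 0 = 1 := h 0 (Fin.succ_ne_zero k').symm
      rw [h0]
      have := prodOf_eq_of (fun i : Fin m => T i.succ) (fun i => f i.succ) k'
        (fun j hj => h j.succ (fun hh => hj (Fin.succ_injective m hh)))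
      rw [this]
      simp

lemma eq_of_normal_inter {A D : Subgroup W} (hA : IsSimpleGroup ↥A)
    (hDA : D ≤ A) (hnorm : ∀ a ∈ A, ∀ d ∈ D, a * d * a⁻¹ ∈ D)
    (x : W) (hxD : x ∈ D) (hx1 : x ≠ 1) : D = A := by
  have hN : (D.subgroupOf A).Normal := by
    constructor
    intro d hd a
    rw [Subgroup.mem_subgroupOf] at hd ⊢
    push_cast
    exact hnorm a a.2 d hd
  rcases hA.eq_bot_or_eq_top_of_normal _ hN with hbot | htop
  · exfalso
    have hx : (⟨x, hDA hxD⟩ : A) ∈ D.subgroupOf A := by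
      rw [Subgroup.mem_subgroupOf]; exact hxD
    rw [hbot, Subgroup.mem_bot] at hx
    exact hx1 (congrArg Subtype.val hx)
  · exact le_antisymm hDA (Subgroup.subgroupOf_eq_top.mp htop)
end helpers

section mainproof
variable {V : Type*} [Finite V]

-- every vertex has a neighbour different from any given vertex
lemma pick_nbr (Γ : SimpleGraph V) (hval : ∀ γ : V, 3 ≤ (Γ.neighborSet γ).ncard)
    (u v : V) : ∃ c, Γ.Adj u c ∧ c ≠ v := by
  by_contra h
  push_neg at h
  have hsub : Γ.neighborSet u ⊆ {v} := by
    intro c hc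
    exact h c hc
  have := Set.ncard_le_ncard hsub (Set.finite_singleton v)
  rw [Set.ncard_singleton] at this
  have := hval u
  omega

lemma step_adj (Γ : SimpleGraph V) (G : Subgroup (Equiv.Perm V))
    (hval : ∀ γ : V, 3 ≤ (Γ.neighborSet γ).ncard) (h2arc : TwoArcTrans Γ G)
    (u v : V) (h : Γ.Adj u v) : ∃ g ∈ G, g v = u := by
  obtain ⟨c, hc, hcv⟩ := pick_nbr Γ hval u v
  obtain ⟨d, hd, hdu⟩ := pick_nbr Γ hval v u
  obtain ⟨g, hg, h1, h2, h3⟩ := h2arc v u c u v d h.symm hc (Ne.symm hcv) h hd (Ne.symm hdu)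
  exact ⟨g, hg, h1⟩

lemma walk_trans (Γ : SimpleGraph V) (G : Subgroup (Equiv.Perm V))
    (hval : ∀ γ : V, 3 ≤ (Γ.neighborSet γ).ncard) (h2arc : TwoArcTrans Γ G) :
    ∀ v v' : V, Γ.Walk v v' → ∃ g ∈ G, g v = v' := by
  intro v v' w
  induction w with
  | nil => exact ⟨1, one_mem G, by simp⟩
  | cons h p ih =>
    obtain ⟨g, hg, hgα⟩ := ih
    obtain ⟨g', hg', hg'e⟩ := step_adj Γ G hval h2arc _ _ h.symm
    exact ⟨g * g', mul_mem hg hg', by simp [Equiv.Perm.mul_apply, hg'e, hgα]⟩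

end mainproof

/-- **Lemma 4.1 (ker-pi).** In the PA setup, each `N_i = ∏_{j ≠ i} T_j` is intransitive
on every `M`-orbit on `V`. -/
theorem stmt_8
    {V : Type*} [Finite V] (Γ : SimpleGraph V)
    (G Gstar M : Subgroup (Equiv.Perm V)) (α β : V)
    (n : ℕ) (T R : Fin n → Subgroup (Equiv.Perm V))
    (hconn : Γ.Connected)
    (hval : ∀ γ : V, 3 ≤ (Γ.neighborSet γ).ncard)
    (hG : IsAutGroup Γ G)
    (h2arc : TwoArcTrans Γ G)
    (hadj : Γ.Adj α β)
    (hGstar : Gstar = stabOf G α ⊔ stabOf G β)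
    (hMGstar : NormalIn M Gstar)
    (hMG : NormalIn M G)
    (hMbot : M ≠ ⊥)
    (hMuniq : ∀ N : Subgroup (Equiv.Perm V), NormalIn N Gstar → N ≠ ⊥ → M ≤ N)
    (hn : 2 ≤ n)
    (hTsimple : ∀ i, IsSimpleGroup ↥(T i))
    (hTnonab : ∀ i, ∃ x ∈ T i, ∃ y ∈ T i, x * y ≠ y * x)
    (hTiso : ∀ i j, Nonempty (↥(T i) ≃* ↥(T j)))
    (hTM : ∀ i, T i ≤ M)
    (hTcomm : ∀ i j, i ≠ j → ∀ x ∈ T i, ∀ y ∈ T j, x * y = y * x)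
    (hfact : ∀ m ∈ M, ∃! f : (i : Fin n) → ↥(T i), m = prodOf T f)
    (hRbot : ∀ i, R i ≠ ⊥) (hRle : ∀ i, R i ≤ T i) (hRne : ∀ i, R i ≠ T i)
    (horb : ∀ γ : V, orbitOf M γ = orbitOf Gstar γ)
    (hMα : ∀ m ∈ stabOf M α, ∀ f : (i : Fin n) → ↥(T i),
      m = prodOf T f → ∀ i, ((f i : Equiv.Perm V)) ∈ R i)
    (hsurj : ∀ i, ∀ y ∈ R i, ∃ m ∈ stabOf M α, ∃ f : (i : Fin n) → ↥(T i),
      m = prodOf T f ∧ ((f i : Equiv.Perm V)) = y)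
    :
    ∀ i : Fin n, ∀ γ : V, ¬ TransOn (⨆ j ∈ ({j | j ≠ i} : Set (Fin n)), T j) (orbitOf M γ) := by
  intro i γ htrans
  have hfac : ∀ m ∈ M, ∃ f : ∀ k, T k, m = prodOf T f := fun m hm => (hfact m hm).exists
  -- conjugation by an element of T k, k ≠ j, fixes T j pointwise
  have hconjfix : ∀ j k, k ≠ j → ∀ x ∈ T k, ∀ h ∈ T j,
      x * h * x⁻¹ = h := by
    intro j k hkj x hx h hh
    rw [hTcomm k j hkj x hx h hh, mul_assoc, mul_inv_cancel, mul_one]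
  -- each T j is normal in M
  have Tnormal : ∀ j, ∀ m ∈ M, ∀ t ∈ T j, m * t * m⁻¹ ∈ T j := by
    intro j m hm t ht
    obtain ⟨f, hf⟩ := hfac m hm
    have hmem : m ∈ Subgroup.normalizer (T j : Set (Equiv.Perm V)) := by
      rw [hf]
      apply Subgroup.list_prod_mem
      intro x hx
      rw [List.mem_ofFn] at hx
      obtain ⟨k, rfl⟩ := hx
      show ((f k : Equiv.Perm V)) ∈ Subgroup.normalizer (T j : Set (Equiv.Perm V))
      by_cases hkj : k = j
      · subst hkj; exact Subgroup.le_normalizer (f k).2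
      · rw [Subgroup.mem_normalizer_iff]
        intro h
        constructor
        · intro hh
          rw [hconjfix j k hkj _ (f k).2 h hh]; exact hh
        · intro hh
          have h2 := hconjfix j k hkj _ (inv_mem (f k).2) _ hh
          rw [inv_inv] at h2
          have h3 : ((f k : Equiv.Perm V))⁻¹ * ((f k) * h * (f k : Equiv.Perm V)⁻¹)
              * (f k) = h := by group
          rw [h3] at h2
          rw [h2]
          exact hh
    exact (Subgroup.mem_normalizer_iff.mp hmem t).mp ht
  -- an element of G carrying γ to α
  obtain ⟨w⟩ := hconn.preconnected γ α
  obtain ⟨g, hgG, hgγ⟩ := walk_trans Γ G hval h2arc γ α w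
  set φ : Equiv.Perm V →* Equiv.Perm V := (MulAut.conj g).toMonoidHom with hφdef
  have hφinj : Function.Injective φ := (MulAut.conj g).injective
  have hφap : ∀ x, φ x = g * x * g⁻¹ := fun x => rfl
  have hSle : ∀ j, (T j).map φ ≤ M := by
    rintro j x ⟨t, ht, rfl⟩
    rw [hφap]
    exact hMG.2 g hgG t (hTM j ht)
  have hSnorm : ∀ j, ∀ m ∈ M, ∀ s ∈ (T j).map φ, m * s * m⁻¹ ∈ (T j).map φ := by
    rintro j m hm s ⟨t, ht, rfl⟩
    have hm' : g⁻¹ * m * g ∈ M := by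
      have := hMG.2 g⁻¹ (inv_mem hgG) m hm
      rwa [inv_inv] at this
    have ht' : (g⁻¹ * m * g) * t * (g⁻¹ * m * g)⁻¹ ∈ T j :=
      Tnormal j _ hm' t ht
    refine ⟨_, ht', ?_⟩
    rw [hφap, hφap]
    group
  -- the image of each T j under conjugation is again some T k
  have hSk : ∀ j, ∃ k, (T j).map φ = T k := by
    intro j
    obtain ⟨x, hx, y, hy, hxy⟩ := hTnonab j
    have hx' : φ x ∈ (T j).map φ := Subgroup.mem_map_of_mem φ hx
    have hy' : φ y ∈ (T j).map φ := Subgroup.mem_map_of_mem φ hy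
    have hxy' : φ x * φ y ≠ φ y * φ x := by
      intro h
      apply hxy
      apply hφinj
      rw [map_mul, map_mul, h]
    have hex : ∃ k, ∃ z, z ∈ (T j).map φ ∧ z ∈ T k ∧ z ≠ 1 := by
      by_contra hno
      push_neg at hno
      have hcent : ∀ s ∈ (T j).map φ, ∀ k, ∀ t ∈ T k, s * t = t * s := by
        intro s hs k t ht
        have h1 : s * t * s⁻¹ ∈ T k := Tnormal k s (hSle j hs) t ht
        have h2 : t * s⁻¹ * t⁻¹ ∈ (T j).map φ :=
          hSnorm j t (hTM k ht) s⁻¹ (inv_mem hs)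
        have h3 : s * t * s⁻¹ * t⁻¹ ∈ (T j).map φ := by
          have := mul_mem hs h2
          rwa [show s * (t * s⁻¹ * t⁻¹) = s * t * s⁻¹ * t⁻¹ by group] at this
        have h4 : s * t * s⁻¹ * t⁻¹ ∈ T k := mul_mem h1 (inv_mem ht)
        have h5 := hno k _ h3 h4
        have h6 : (s * t) * (t * s)⁻¹ = 1 := by
          rw [← h5]; group
        rw [mul_inv_eq_one] at h6
        exact h6
      obtain ⟨f, hf⟩ := hfac (φ y) (hSle j hy')
      apply hxy'
      rw [hf]
      exact (commute_prodOf T f (φ x) (fun k => hcent (φ x) hx' k _ (f k).2)).eq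
    obtain ⟨k, z, hz1, hz2, hz3⟩ := hex
    have hsimpS : IsSimpleGroup ↥((T j).map φ) := by
      have hnt : Nontrivial ↥((T j).map φ) := by
        refine ⟨⟨z, hz1⟩, 1, ?_⟩
        intro h
        exact hz3 (congrArg Subtype.val h)
      haveI := hTsimple j
      haveI := hnt
      exact IsSimpleGroup.isSimpleGroup_of_surjective
        ((T j).equivMapOfInjective φ hφinj).toMonoidHom
        ((T j).equivMapOfInjective φ hφinj).surjective
    refine ⟨k, le_antisymm ?_ ?_⟩
    · -- map φ (T j) ≤ T k
      have hD : ((T j).map φ ⊓ T k) = (T j).map φ := by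
        apply eq_of_normal_inter hsimpS inf_le_left
        · intro a ha d hd
          rw [Subgroup.mem_inf] at hd ⊢
          exact ⟨mul_mem (mul_mem ha hd.1) (inv_mem ha),
            Tnormal k a (hSle j ha) d hd.2⟩
        · exact Subgroup.mem_inf.mpr ⟨hz1, hz2⟩
        · exact hz3
      rw [← hD]; exact inf_le_right
    · -- T k ≤ map φ (T j)
      have hD : ((T j).map φ ⊓ T k) = T k := by
        apply eq_of_normal_inter (hTsimple k) inf_le_right
        · intro a ha d hd
          rw [Subgroup.mem_inf] at hd ⊢
          exact ⟨hSnorm j a (hTM k ha) d hd.1, mul_mem (mul_mem ha hd.2) (inv_mem ha)⟩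
        · exact Subgroup.mem_inf.mpr ⟨hz1, hz2⟩
        · exact hz3
      rw [← hD]; exact inf_le_left
  choose σ hσ using hSk
  have hTinj : Function.Injective T := by
    intro a b hab
    by_contra hne
    obtain ⟨x, hx, y, hy, hxy⟩ := hTnonab a
    exact hxy (hTcomm a b hne x hx y (hab ▸ hy))
  have hσinj : Function.Injective σ := by
    intro j j' h
    apply hTinj
    have h2 : (T j).map φ = (T j').map φ := by rw [hσ j, hσ j', h]
    exact Subgroup.map_injective hφinj h2
  -- the subgroup N' = ∏_{k ≠ σ i} T k is transitive on the M-orbit of α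
  set i' := σ i with hi'
  set N' : Subgroup (Equiv.Perm V) := ⨆ j ∈ ({j | j ≠ i'} : Set (Fin n)), T j with hN'
  have hN'le : ∀ j, j ≠ i' → T j ≤ N' := by
    intro j hj
    exact le_iSup₂ (f := fun (j : Fin n) (_ : j ∈ ({j | j ≠ i'} : Set (Fin n))) => T j) j hj
  have hNM : (⨆ j ∈ ({j | j ≠ i} : Set (Fin n)), T j) ≤ M :=
    iSup_le fun j => iSup_le fun _ => hTM j
  have hN'M : N' ≤ M := iSup_le fun j => iSup_le fun _ => hTM j
  have hconjN : ∀ u ∈ (⨆ j ∈ ({j | j ≠ i} : Set (Fin n)), T j), g * u * g⁻¹ ∈ N' := by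
    intro u hu
    have hle : (⨆ j ∈ ({j | j ≠ i} : Set (Fin n)), T j) ≤ N'.comap φ := by
      refine iSup_le fun j => iSup_le fun hj => ?_
      intro t ht
      rw [Subgroup.mem_comap]
      have h1 : φ t ∈ (T j).map φ := Subgroup.mem_map_of_mem φ ht
      rw [hσ j] at h1
      exact hN'le (σ j) (fun h => hj (hσinj h)) h1
    have := hle hu
    rw [Subgroup.mem_comap, hφap] at this
    exact this
  have horbmem : ∀ x ∈ orbitOf M α, (g⁻¹ : Equiv.Perm V) x ∈ orbitOf M γ := by
    rintro x ⟨m, hm, rfl⟩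
    refine ⟨g⁻¹ * m * g, ?_, ?_⟩
    · have := hMG.2 g⁻¹ (inv_mem hgG) m hm
      rwa [inv_inv] at this
    · simp [Equiv.Perm.mul_apply, hgγ]
  have htrans' : TransOn N' (orbitOf M α) := by
    intro x hx y hy
    obtain ⟨u, hu, hue⟩ := htrans _ (horbmem x hx) _ (horbmem y hy)
    refine ⟨g * u * g⁻¹, hconjN u hu, ?_⟩
    have : (g * u * g⁻¹ : Equiv.Perm V) x = g (u (g⁻¹ x)) := by
      simp [Equiv.Perm.mul_apply]
    rw [this, hue]
    simp
  -- the subgroup of elements whose i'-component is trivial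
  classical
  set K : Subgroup (Equiv.Perm V) :=
    { carrier := {x | ∃ f : ∀ k, T k, x = prodOf T f ∧ f i' = 1}
      mul_mem' := by
        rintro a b ⟨f, rfl, hf⟩ ⟨f', rfl, hf'⟩
        exact ⟨f * f', (prodOf_mul T hTcomm f f').symm, by
          show f i' * f' i' = 1
          rw [hf, hf', mul_one]⟩
      one_mem' := ⟨1, (prodOf_one T).symm, rfl⟩
      inv_mem' := by
        rintro a ⟨f, rfl, hf⟩
        exact ⟨f⁻¹, (prodOf_inv T hTcomm f).symm, by
          show (f i')⁻¹ = 1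
          rw [hf, inv_one]⟩ } with hK
  have hN'K : N' ≤ K := by
    refine iSup_le fun j => iSup_le fun hj => ?_
    intro t ht
    refine ⟨Pi.mulSingle j ⟨t, ht⟩, ?_, ?_⟩
    · rw [prodOf_eq_of T _ j (fun k hk => Pi.mulSingle_eq_of_ne hk _)]
      simp
    · exact Pi.mulSingle_eq_of_ne (Ne.symm hj) _
  -- conclude T i' ≤ R i'
  have hTR : T i' ≤ R i' := by
    intro t ht
    have h0 : α ∈ orbitOf M α := ⟨1, one_mem M, by simp⟩
    have h1 : t α ∈ orbitOf M α := ⟨t, hTM _ ht, rfl⟩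
    obtain ⟨u, huN, hue⟩ := htrans' α h0 (t α) h1
    obtain ⟨f, hfu, hfi⟩ := hN'K huN
    have hmM : u⁻¹ * t ∈ M := mul_mem (inv_mem (hN'M huN)) (hTM _ ht)
    have hstab : u⁻¹ * t ∈ stabOf M α := by
      rw [stabOf, Subgroup.mem_inf]
      refine ⟨hmM, ?_⟩
      rw [MulAction.mem_stabilizer_iff]
      show (u⁻¹ * t : Equiv.Perm V) α = α
      rw [Equiv.Perm.mul_apply, ← hue]
      simp
    let fδ : (k : Fin n) → ↥(T k) := Pi.mulSingle i' ⟨t, ht⟩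
    have hfδ1 : ∀ k, k ≠ i' → fδ k = 1 := fun k hk => Pi.mulSingle_eq_of_ne hk _
    have hfδ2 : fδ i' = ⟨t, ht⟩ := Pi.mulSingle_eq_same i' _
    have hfm : u⁻¹ * t = prodOf T (f⁻¹ * fδ) := by
      rw [prodOf_mul T hTcomm, prodOf_inv T hTcomm, ← hfu, prodOf_eq_of T fδ i' hfδ1, hfδ2]
    have := hMα _ hstab _ hfm i'
    have heval : (((f⁻¹ * fδ) i' : ↥(T i')) : Equiv.Perm V) = t := by
      show (((f i')⁻¹ * fδ i' : ↥(T i')) : Equiv.Perm V) = t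
      rw [hfi, hfδ2]
      simp
    rwa [heval] at this
  exact hRne i' (le_antisymm (hRle i') hTR)
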